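/- arXiv:2604.07056 — 3 statements merged into one kernel-verified Lean document; each statement's English description precedes it below -/
import Mathlib

section
/- Let V be the simple sl₂(𝕂)-module of highest weight p ≥ 0, with basis v_p, v_{p−2}, …, v_{−p} satisfying h·v_{p−2i} = (p−2i)v_{p−2i}, f·v_{p−2i} = v_{p−2i−2} for i < p, and f·v_{−p} = 0. Let U ⊆ V be an h-stable subspace of dimension k, written U = ⟨v_{n_0}⟩ ⊕ … ⊕ ⟨v_{n_{k−1}}⟩ with n_0 < … < n_{k−1}. Then the limit as t → ∞ of exp(tf)·U in the Grassmannian of k-dimensional subspaces of V exists and equals ⟨v_{−p}⟩ ⊕ ⟨v_{−p+2}⟩ ⊕ … ⊕ ⟨v_{−p+2k−2}⟩. -/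
open Finset Matrix

section Aux

lemma auxStrict {k : ℕ} (g : Fin k → ℕ) (hg : StrictMono g) : ∀ m (hm : m < k), m ≤ g ⟨m, hm⟩ := by
  intro m
  induction m with
  | zero => intro _; exact Nat.zero_le _
  | succ m ih =>
    intro hm
    have h1 : m < k := by omega
    have := hg (show (⟨m, h1⟩ : Fin k) < ⟨m+1, hm⟩ by simp [Fin.lt_def])
    have := ih h1
    omega

lemma aux0 {k : ℕ} (u : Fin k → ℕ) (hinj : Function.Injective u) :
    (∑ j : Fin k, (j : ℕ)) ≤ ∑ j, u j ∧
    ((∑ j : Fin k, (j : ℕ)) = ∑ j, u j → ∃ σ : Equiv.Perm (Fin k), ∀ j, u j = σ j) := by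
  classical
  set s : Finset ℕ := Finset.image u Finset.univ with hs
  have hcard : s.card = k := by
    rw [hs, Finset.card_image_of_injective _ hinj, Finset.card_univ, Fintype.card_fin]
  set g := s.orderEmbOfFin hcard with hgdef
  have hgs : ∀ i, g i ∈ s := fun i => Finset.orderEmbOfFin_mem s hcard i
  have hsum1 : ∑ j, u j = ∑ x ∈ s, x := by
    rw [hs, Finset.sum_image (fun x _ y _ h => hinj h)]
  have hsum2 : ∑ x ∈ s, x = ∑ i : Fin k, g i := by
    have hrange : Finset.image (fun i => g i) Finset.univ = s := by
      ext x
      simp only [Finset.mem_image, Finset.mem_univ, true_and]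
      constructor
      · rintro ⟨i, rfl⟩; exact hgs i
      · intro hx
        have : x ∈ Set.range g := by rw [Finset.range_orderEmbOfFin s hcard]; exact hx
        obtain ⟨i, rfl⟩ := this; exact ⟨i, rfl⟩
    rw [← hrange, Finset.sum_image (fun x _ y _ h => g.injective h)]
  have hterm : ∀ i : Fin k, (i : ℕ) ≤ g i := fun i => auxStrict g (g.strictMono) i i.2
  have hle : (∑ j : Fin k, (j : ℕ)) ≤ ∑ j, u j := by
    rw [hsum1, hsum2]; exact Finset.sum_le_sum fun i _ => hterm i
  refine ⟨hle, fun heq => ?_⟩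
  have heq' : ∀ i : Fin k, (i : ℕ) = g i := by
    have := (Finset.sum_eq_sum_iff_of_le (fun i _ => hterm i)).mp (by rw [heq, hsum1, hsum2])
    intro i; exact (this i (Finset.mem_univ i))
  have hsub : ∀ j, u j < k := by
    intro j
    have : u j ∈ s := by rw [hs]; exact Finset.mem_image_of_mem u (Finset.mem_univ j)
    have : u j ∈ Set.range g := by rw [Finset.range_orderEmbOfFin s hcard]; exact this
    obtain ⟨i, hi⟩ := this
    rw [← hi, ← heq' i]
    exact i.2
  let σ' : Fin k → Fin k := fun j => ⟨u j, hsub j⟩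
  have hσinj : Function.Injective σ' := by
    intro a b h
    apply hinj
    simpa [σ', Fin.mk.injEq] using h
  refine ⟨Equiv.ofBijective σ' (Finite.injective_iff_bijective.mp hσinj), fun j => rfl⟩

lemma auxLe {p k : ℕ} (hkp : k ≤ p + 1) (v : Fin k → ℕ) (hinj : Function.Injective v)
    (hle : ∀ j, v j ≤ p) :
    (∑ j, v j) ≤ (∑ j : Fin k, (p - (j : ℕ))) ∧
    ((∑ j, v j) = (∑ j : Fin k, (p - (j : ℕ))) →
      ∃ σ : Equiv.Perm (Fin k), ∀ j, v j = p - (σ j : ℕ)) := by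
  set u : Fin k → ℕ := fun j => p - v j with hu
  have huinj : Function.Injective u := by
    intro a b h
    apply hinj
    have ha := hle a; have hb := hle b
    simp only [hu] at h
    omega
  obtain ⟨h1, h2⟩ := aux0 u huinj
  have hvu : ∀ j : Fin k, v j + u j = p := fun j => by
    have := hle j; simp only [hu]; omega
  have hpj : ∀ j : Fin k, (p - (j : ℕ)) + (j : ℕ) = p := fun j => by
    have : (j : ℕ) < k := j.2; omega
  have hsum : (∑ j, v j) + (∑ j, u j) = (∑ j : Fin k, (p - (j : ℕ))) + (∑ j : Fin k, (j : ℕ)) := by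
    rw [← Finset.sum_add_distrib, ← Finset.sum_add_distrib]
    exact Finset.sum_congr rfl fun j _ => by rw [hvu j, hpj j]
  constructor
  · omega
  · intro heq
    obtain ⟨σ, hσ⟩ := h2 (by omega)
    exact ⟨σ, fun j => by have := hvu j; have := hσ j; omega⟩ 

lemma auxDet {𝕂 : Type*} [Field 𝕂] [CharZero 𝕂] {k : ℕ} (y : Fin k → ℕ)
    (hy : Function.Injective y) :
    (Matrix.of (fun i j : Fin k => ((y j).descFactorial (i : ℕ) : 𝕂) / (((y j).factorial : ℕ) : 𝕂))).det ≠ 0 := by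
  have hM : (Matrix.of (fun i j : Fin k => ((y j).descFactorial (i : ℕ) : 𝕂) / (((y j).factorial : ℕ) : 𝕂)))
      = (Matrix.of (fun i j : Fin k => (descPochhammer 𝕂 (j : ℕ)).eval ((y i : ℕ) : 𝕂)))ᵀ
        * Matrix.diagonal (fun j => (((y j).factorial : ℕ) : 𝕂)⁻¹) := by
    ext i j
    rw [Matrix.mul_diagonal]
    simp only [Matrix.transpose_apply, Matrix.of_apply]
    rw [descPochhammer_eval_eq_descFactorial, div_eq_mul_inv]
  rw [hM, Matrix.det_mul, Matrix.det_transpose, Matrix.det_diagonal]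
  have hvd : (Matrix.of (fun i j : Fin k => (descPochhammer 𝕂 (j : ℕ)).eval ((y i : ℕ) : 𝕂))).det
      = (Matrix.vandermonde (fun i => ((y i : ℕ) : 𝕂))).det := by
    rw [Matrix.det_eval_matrixOfPolynomials_eq_det_vandermonde
      (fun i => ((y i : ℕ) : 𝕂)) (fun j => descPochhammer 𝕂 (j : ℕ))
      (fun i => descPochhammer_natDegree 𝕂 (i : ℕ)) (fun i => monic_descPochhammer 𝕂 (i : ℕ))]
  rw [hvd]
  apply mul_ne_zero
  · rw [Matrix.det_vandermonde_ne_zero_iff]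
    intro a b h
    exact hy (Nat.cast_injective h)
  · apply Finset.prod_ne_zero_iff.mpr
    intro j _
    exact inv_ne_zero (Nat.cast_ne_zero.mpr (Nat.factorial_ne_zero _))

end Aux

set_option maxHeartbeats 1000000 in
/-- Let `V = 𝕂^{p+1}` be the simple `sl₂`-module of highest weight `p`, with
weight basis `v_{p-2i} = e i` (`i = 0, …, p`), on which `f` acts by `f (e i) = e (i+1)`,
`f (e p) = 0`.  Let `U` be the `h`-stable `k`-dimensional subspace spanned by the basis vectors
`e (idx 0), …, e (idx (k-1))`.  Then the limit as `t → ∞` of `exp(t f) U` in the Grassmannian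
exists and equals `⟨v_{-p}⟩ ⊕ ⟨v_{-p+2}⟩ ⊕ … ⊕ ⟨v_{-p+2k-2}⟩ = ⟨e p, e (p-1), …, e (p-k+1)⟩`.
This is expressed via Plücker coordinates: the curve
`t ↦ exp(t f) u₀ ∧ … ∧ exp(t f) u_{k-1}` in `Λᵏ V` is polynomial in `t`, and its leading
coefficient is a nonzero scalar multiple of `e p ∧ e (p-1) ∧ … ∧ e (p-k+1)`; hence the limit of
the corresponding lines in `ℙ(Λᵏ V)` as `t → ∞` is the line spanned by the latter vector. -/
theorem stmt2 (𝕂 : Type*) [Field 𝕂] [CharZero 𝕂]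
    (p k : ℕ) (hk : 0 < k) (hkp : k ≤ p + 1)
    (f : Module.End 𝕂 (Fin (p + 1) → 𝕂))
    (hf : ∀ i : Fin (p + 1), f (Pi.single i 1) =
      if h : (i : ℕ) + 1 < p + 1 then Pi.single (⟨(i : ℕ) + 1, h⟩ : Fin (p + 1)) 1 else 0)
    (expf : 𝕂 → Module.End 𝕂 (Fin (p + 1) → 𝕂))
    (hexp : ∀ t, expf t =
      ∑ m ∈ Finset.range (p + 1), (t ^ m / (Nat.factorial m : 𝕂)) • f ^ m)
    (idx : Fin k → Fin (p + 1)) (hidx : StrictMono idx)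
    (w : 𝕂 → ExteriorAlgebra 𝕂 (Fin (p + 1) → 𝕂))
    (hw : ∀ t, w t = ExteriorAlgebra.ιMulti 𝕂 k (fun j => expf t (Pi.single (idx j) 1))) :
    ∃ (d : ℕ) (a : ℕ → ExteriorAlgebra 𝕂 (Fin (p + 1) → 𝕂)) (c : 𝕂),
      (∀ t, w t = ∑ m ∈ Finset.range (d + 1), t ^ m • a m) ∧
      c ≠ 0 ∧
      a d = c • ExteriorAlgebra.ιMulti 𝕂 k
        (fun j : Fin k => Pi.single (⟨p - (j : ℕ), by omega⟩ : Fin (p + 1)) 1) := by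
  classical
  -- basic notation
  set n : Fin k → ℕ := fun j => (idx j : ℕ) with hn
  have hninj : Function.Injective n := fun a b h => hidx.injective (Fin.ext h)
  have hnle : ∀ j, n j ≤ p := fun j => Nat.lt_succ_iff.mp (idx j).2
  set vec : ℕ → (Fin (p + 1) → 𝕂) :=
    fun m => if h : m < p + 1 then Pi.single (⟨m, h⟩ : Fin (p + 1)) 1 else 0 with hvec
  have hvec0 : ∀ m, p < m → vec m = 0 := fun m hm => dif_neg (by omega)
  -- action of powers of f on basis vectors
  have hfm : ∀ (m : ℕ) (i : Fin (p + 1)), (f ^ m) (Pi.single i 1) = vec ((i : ℕ) + m) := by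
    intro m
    induction m with
    | zero =>
      intro i
      simp only [pow_zero, Module.End.one_apply, hvec, Nat.add_zero]
      rw [dif_pos i.2, Fin.eta]
    | succ m ih =>
      intro i
      rw [pow_succ', Module.End.mul_apply, ih i]
      by_cases h : (i : ℕ) + m < p + 1
      · have : vec ((i : ℕ) + m) = Pi.single (⟨(i : ℕ) + m, h⟩ : Fin (p + 1)) 1 := dif_pos h
        rw [this, hf]
        simp only [hvec]
        by_cases h2 : (i : ℕ) + m + 1 < p + 1
        · rw [dif_pos h2, dif_pos (by omega : (i:ℕ) + (m+1) < p + 1)]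
          congr 1
        · rw [dif_neg h2, dif_neg (by omega : ¬ ((i:ℕ) + (m+1) < p + 1))]
      · rw [hvec0 _ (by omega), map_zero, hvec0 _ (by omega)]
  -- the wedge of the shifted basis vectors and the coefficients
  set W : (Fin k → ℕ) → ExteriorAlgebra 𝕂 (Fin (p + 1) → 𝕂) :=
    fun r => ExteriorAlgebra.ιMulti 𝕂 k (fun j => vec (n j + r j)) with hW
  set C : (Fin k → ℕ) → 𝕂 := fun r => ∏ j, (((r j).factorial : 𝕂))⁻¹ with hC
  have hCne : ∀ r, C r ≠ 0 := by
    intro r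
    rw [hC]
    exact Finset.prod_ne_zero_iff.mpr fun j _ =>
      inv_ne_zero (Nat.cast_ne_zero.mpr (Nat.factorial_ne_zero _))
  -- the degree
  have hsumn := auxLe hkp n hninj hnle
  set d : ℕ := (∑ j : Fin k, (p - (j : ℕ))) - ∑ j, n j with hddef
  have hd : (∑ j, n j) + d = ∑ j : Fin k, (p - (j : ℕ)) := by
    have := hsumn.1; omega
  -- vanishing of wedges of too high degree
  have hvanish : ∀ r : Fin k → ℕ, d < ∑ j, r j → W r = 0 := by
    intro r hr
    by_contra hWne
    have hle : ∀ j, n j + r j ≤ p := by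
      intro j
      by_contra h
      exact hWne ((ExteriorAlgebra.ιMulti 𝕂 k).toMultilinearMap.map_coord_zero j
        (hvec0 _ (by omega)))
    have hinj : Function.Injective (fun j => n j + r j) := by
      intro a b hab
      by_contra hne
      exact hWne (AlternatingMap.map_eq_zero_of_eq _ _
        (congrArg vec hab) hne)
    have := (auxLe hkp (fun j => n j + r j) hinj hle).1
    rw [Finset.sum_add_distrib] at this
    omega
  -- the polynomial coefficients
  set a : ℕ → ExteriorAlgebra 𝕂 (Fin (p + 1) → 𝕂) :=
    fun m => ∑ r ∈ (Fintype.piFinset fun _ : Fin k => Finset.range (p + 1)).filter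
      (fun r => ∑ j, r j = m), C r • W r with ha
  -- the expansion of w t
  have h1 : ∀ t, w t = ∑ m ∈ Finset.range (d + 1), t ^ m • a m := by
    intro t
    have e1 : w t = ExteriorAlgebra.ιMulti 𝕂 k
        (fun j => ∑ m ∈ Finset.range (p + 1), (t ^ m / (Nat.factorial m : 𝕂)) • vec (n j + m)) := by
      rw [hw]
      congr 1
      funext j
      rw [hexp]
      simp only [LinearMap.coe_sum, Finset.sum_apply, LinearMap.smul_apply]
      exact Finset.sum_congr rfl fun m _ => by rw [hfm m (idx j)]
    have e2 : w t = ∑ r ∈ Fintype.piFinset (fun _ : Fin k => Finset.range (p + 1)),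
        (∏ j, (t ^ (r j) / ((r j).factorial : 𝕂))) • W r := by
      rw [e1, ← AlternatingMap.coe_multilinearMap,
        MultilinearMap.map_sum_finset (ExteriorAlgebra.ιMulti 𝕂 k).toMultilinearMap
          (fun j m => (t ^ m / (Nat.factorial m : 𝕂)) • vec (n j + m))
          (fun _ => Finset.range (p + 1))]
      exact Finset.sum_congr rfl fun r _ => by
        rw [MultilinearMap.map_smul_univ, AlternatingMap.coe_multilinearMap]
    have e3 : w t = ∑ r ∈ Fintype.piFinset (fun _ : Fin k => Finset.range (p + 1)),
        t ^ (∑ j, r j) • (C r • W r) := by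
      rw [e2]
      refine Finset.sum_congr rfl fun r _ => ?_
      rw [smul_smul]
      congr 1
      rw [hC]
      rw [← Finset.prod_pow_eq_pow_sum, ← Finset.prod_mul_distrib]
      exact Finset.prod_congr rfl fun j _ => div_eq_mul_inv _ _
    have hmaps : ∀ r ∈ Fintype.piFinset (fun _ : Fin k => Finset.range (p + 1)),
        (∑ j, r j) ∈ Finset.range (k * p + 1) := by
      intro r hr
      rw [Finset.mem_range, Nat.lt_succ_iff]
      calc ∑ j, r j ≤ ∑ _j : Fin k, p := Finset.sum_le_sum fun j _ => by
              have := Fintype.mem_piFinset.mp hr j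
              rw [Finset.mem_range] at this
              omega
        _ = k * p := by rw [Finset.sum_const, Finset.card_univ, Fintype.card_fin, smul_eq_mul]
    have e4 : w t = ∑ m ∈ Finset.range (k * p + 1), t ^ m • a m := by
      rw [e3, ← Finset.sum_fiberwise_of_maps_to hmaps
        (fun r => t ^ (∑ j, r j) • (C r • W r))]
      refine Finset.sum_congr rfl fun m _ => ?_
      rw [ha, Finset.smul_sum]
      refine Finset.sum_congr rfl fun r hr => ?_
      rw [(Finset.mem_filter.mp hr).2]
    rw [e4]
    have hdk : d + 1 ≤ k * p + 1 := by
      have h2 : (∑ j : Fin k, (p - (j : ℕ))) ≤ ∑ _j : Fin k, p :=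
        Finset.sum_le_sum fun j _ => Nat.sub_le _ _
      rw [Finset.sum_const, Finset.card_univ, Fintype.card_fin, smul_eq_mul] at h2
      omega
    rw [← Finset.sum_subset (Finset.range_subset_range.mpr hdk)]
    intro m hm hm2
    rw [Finset.mem_range] at hm
    rw [Finset.mem_range, Nat.lt_succ_iff, not_le] at hm2
    have : a m = 0 := by
      rw [ha]
      refine Finset.sum_eq_zero fun r hr => ?_
      rw [hvanish r (by rw [(Finset.mem_filter.mp hr).2]; omega), smul_zero]
    rw [this, smul_zero]
  -- the matrix and its determinant
  set M : Matrix (Fin k) (Fin k) 𝕂 := Matrix.of fun i j : Fin k =>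
    (((p - n j).descFactorial (i : ℕ)) : 𝕂) / (((p - n j).factorial : ℕ) : 𝕂) with hM
  have hyinj : Function.Injective (fun j => p - n j) := by
    intro a b h
    apply hninj
    have := hnle a; have := hnle b
    simp only at h
    omega
  have hc : M.det ≠ 0 := auxDet (fun j => p - n j) hyinj
  -- the bottom wedge
  set B : ExteriorAlgebra 𝕂 (Fin (p + 1) → 𝕂) :=
    ExteriorAlgebra.ιMulti 𝕂 k (fun j : Fin k => vec (p - (j : ℕ))) with hB
  have hBeq : (ExteriorAlgebra.ιMulti 𝕂 k
      (fun j : Fin k => Pi.single (⟨p - (j : ℕ), by omega⟩ : Fin (p + 1)) 1)) = B := by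
    rw [hB]
    congr 1
    funext j
    have h5 : p - (j : ℕ) < p + 1 := by omega
    simp only [hvec, dif_pos h5]
  refine ⟨d, a, M.det, h1, hc, ?_⟩
  rw [hBeq]
  -- compute a d
  have hexists : ∀ r ∈ (Fintype.piFinset fun _ : Fin k => Finset.range (p + 1)).filter
      (fun r => ∑ j, r j = d), C r • W r ≠ 0 →
      ∃ σ : Equiv.Perm (Fin k), ∀ j, n j + r j = p - (σ j : ℕ) := by
    intro r hr hne
    have hWne : W r ≠ 0 := fun h => hne (by rw [h, smul_zero])
    have hle : ∀ j, n j + r j ≤ p := by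
      intro j
      by_contra h
      exact hWne ((ExteriorAlgebra.ιMulti 𝕂 k).toMultilinearMap.map_coord_zero j
        (hvec0 _ (by omega)))
    have hinj : Function.Injective (fun j => n j + r j) := by
      intro a b hab
      by_contra hne2
      exact hWne (AlternatingMap.map_eq_zero_of_eq _ _ (congrArg vec hab) hne2)
    have hsum : (∑ j, (n j + r j)) = ∑ j : Fin k, (p - (j : ℕ)) := by
      rw [Finset.sum_add_distrib, (Finset.mem_filter.mp hr).2]
      exact hd
    exact (auxLe hkp (fun j => n j + r j) hinj hle).2 hsum
  set i : ∀ r ∈ (Fintype.piFinset fun _ : Fin k => Finset.range (p + 1)).filter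
      (fun r => ∑ j, r j = d), C r • W r ≠ 0 → Equiv.Perm (Fin k) :=
    fun r h1 h2 => Classical.choose (hexists r h1 h2) with hi
  have hispec : ∀ r h1 h2, ∀ j, n j + r j = p - ((i r h1 h2) j : ℕ) :=
    fun r h1 h2 => Classical.choose_spec (hexists r h1 h2)
  have key : (a d) = ∑ σ : Equiv.Perm (Fin k),
      (((Equiv.Perm.sign σ : ℤ) : 𝕂) * ∏ j, M (σ j) j) • B := by
    rw [ha]
    refine Finset.sum_bij_ne_zero i (fun _ _ _ => Finset.mem_univ _) ?_ ?_ ?_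
    · -- injectivity
      intro r₁ h₁₁ h₁₂ r₂ h₂₁ h₂₂ heq
      funext j
      have e1 := hispec r₁ h₁₁ h₁₂ j
      have e2 := hispec r₂ h₂₁ h₂₂ j
      rw [heq] at e1
      omega
    · -- surjectivity
      intro σ _ hσ
      have hBne : B ≠ 0 := fun h => hσ (by rw [h, smul_zero])
      have hprodne : (∏ j, M (σ j) j) ≠ 0 := fun h => hσ (by rw [h, mul_zero, zero_smul])
      have hentry : ∀ j, (σ j : ℕ) ≤ p - n j := by
        intro j
        by_contra hlt
        apply hprodne
        refine Finset.prod_eq_zero (Finset.mem_univ j) ?_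
        rw [hM]
        simp only [Matrix.of_apply]
        rw [Nat.descFactorial_eq_zero_iff_lt.mpr (by omega), Nat.cast_zero, zero_div]
      set r : Fin k → ℕ := fun j => p - (σ j : ℕ) - n j with hr
      have hrval : ∀ j, n j + r j = p - (σ j : ℕ) := by
        intro j
        have := hentry j
        have := hnle j
        simp only [hr]
        omega
      have hrmem : r ∈ (Fintype.piFinset fun _ : Fin k => Finset.range (p + 1)).filter
          (fun r => ∑ j, r j = d) := by
        rw [Finset.mem_filter]
        constructor
        · rw [Fintype.mem_piFinset]
          intro j
          rw [Finset.mem_range]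
          simp only [hr]
          omega
        · have : (∑ j, (n j + r j)) = ∑ j : Fin k, (p - (j : ℕ)) := by
            have : (∑ j, (n j + r j)) = ∑ j, (p - ((σ j : Fin k) : ℕ)) :=
              Finset.sum_congr rfl fun j _ => hrval j
            rw [this]
            exact Equiv.sum_comp σ (fun j => p - (j : ℕ))
          rw [Finset.sum_add_distrib] at this
          omega
      have hWr : W r = (Equiv.Perm.sign σ : ℤ) • B := by
        simp only [hW, hB]
        have : (fun j => vec (n j + r j)) = (fun j : Fin k => vec (p - (j : ℕ))) ∘ σ := by
          funext j
          simp only [Function.comp_apply]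
          rw [hrval j]
        rw [this]
        have := AlternatingMap.map_perm (ExteriorAlgebra.ιMulti 𝕂 k)
          (fun j : Fin k => vec (p - (j : ℕ))) σ
        rw [this, Units.smul_def]
      have hne : C r • W r ≠ 0 := by
        rw [hWr]
        apply smul_ne_zero (hCne r)
        intro h
        rcases Int.units_eq_one_or (Equiv.Perm.sign σ) with hs | hs <;>
          rw [hs] at h <;> simp at h <;> exact hBne h
      refine ⟨r, hrmem, hne, ?_⟩
      -- chosen perm equals σ
      have hspec := hispec r hrmem hne
      ext j
      have e1 := hspec j
      have e2 := hrval j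
      have h3 : ((i r hrmem hne) j : ℕ) ≤ k - 1 := by
        have := ((i r hrmem hne) j).2; omega
      have h4 : (σ j : ℕ) ≤ k - 1 := by have := (σ j).2; omega
      have := hnle j
      omega
    · -- values match
      intro r h₁ h₂
      set σ := i r h₁ h₂ with hσ
      have hspec := hispec r h₁ h₂
      rw [← hσ] at hspec
      have hle : ∀ j, (σ j : ℕ) ≤ p - n j := by
        intro j
        have := hspec j
        have := hnle j
        have h4 : (σ j : ℕ) < k := (σ j).2
        omega
      have hrj : ∀ j, r j = (p - n j) - (σ j : ℕ) := by
        intro j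
        have := hspec j
        have := hnle j
        have h4 : (σ j : ℕ) < k := (σ j).2
        omega
      have hCeq : C r = ∏ j, M (σ j) j := by
        rw [hC]
        refine Finset.prod_congr rfl fun j _ => ?_
        rw [hM]
        simp only [Matrix.of_apply]
        have hfac : ((p - n j).factorial : ℕ) =
            ((r j).factorial) * ((p - n j).descFactorial ((σ j : ℕ))) := by
          rw [hrj j]
          exact (Nat.factorial_mul_descFactorial (hle j)).symm
        rw [hfac]
        push_cast
        rw [mul_comm ((r j).factorial : 𝕂)]
        rw [div_mul_eq_div_div, div_self, one_div]
        exact Nat.cast_ne_zero.mpr (fun h0 =>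
          absurd (Nat.descFactorial_eq_zero_iff_lt.mp h0) (by have := hle j; omega))
      have hWr : W r = (Equiv.Perm.sign σ : ℤ) • B := by
        simp only [hW, hB]
        have : (fun j => vec (n j + r j)) = (fun j : Fin k => vec (p - (j : ℕ))) ∘ σ := by
          funext j
          simp only [Function.comp_apply]
          rw [hspec j]
        rw [this]
        have := AlternatingMap.map_perm (ExteriorAlgebra.ιMulti 𝕂 k)
          (fun j : Fin k => vec (p - (j : ℕ))) σ
        rw [this, Units.smul_def]
      rw [hWr, hCeq, ← Int.cast_smul_eq_zsmul 𝕂 ((Equiv.Perm.sign σ : ℤ)) B,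
        smul_smul]
      congr 1
      ring
  rw [key, ← Finset.sum_smul, Matrix.det_apply']
end

section
/- Let G be connected reductive with standard Levi L, set of C-roots Φ (C the connected center of L), and let Ψ ⊆ Φ⁺ be a nonempty finite subset closed under the property of Lemma (sums): if λ ∈ Ψ and λ = μ + ν with μ, ν ∈ Φ⁺ then {μ,ν} ∩ Ψ ≠ ∅. Then there exists a simple root α ∈ Π \ Π_L whose restriction ᾱ to C lies in Ψ. -/
/-- Combinatorial setting: `Δ⁺ ⊆ 𝔛(T)` the positive roots, `SR` the simple
roots, `ε : 𝔛(T) → 𝔛(C)` the restriction to the connected center of a standard Levi `L`,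
`Δ⁺_L = {δ ∈ Δ⁺ : ε δ = 0}`, `Φ⁺ = ε (Δ⁺ \ Δ⁺_L)` the positive `C`-roots.  Let `Ψ ⊆ Φ⁺` be
a nonempty subset which is sum-closed in the sense of the Lemma: if `λ ∈ Ψ` and `λ = μ + ν`
with `μ, ν ∈ Φ⁺` then `{μ, ν} ∩ Ψ ≠ ∅`.  Then there exists a simple root
`α ∈ Π \ Π_L` (i.e. `ε α ≠ 0`) whose restriction `ᾱ = ε α` lies in `Ψ`. -/
theorem stmt8 {XT XC : Type*} [AddCommGroup XT] [AddCommGroup XC]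
    (ε : XT →+ XC)
    (Δpos : Set XT) (SR : Finset XT) (hSR : ↑SR ⊆ Δpos)
    (ht : XT → ℕ)                                          -- the height function
    (hht1 : ∀ β ∈ SR, ht β = 1)
    (hht : ∀ δ ∈ Δpos, ∀ β ∈ SR, δ - β ∈ Δpos → ht (δ - β) + 1 = ht δ)
    (hhtpos : ∀ δ ∈ Δpos, 0 < ht δ)
    -- every non-simple positive root admits subtraction of a simple root
    (haux : ∀ δ ∈ Δpos, δ ∉ (SR : Set XT) → ∃ β ∈ SR, δ - β ∈ Δpos)
    (ΔLpos : Set XT) (hΔL : ΔLpos = {δ ∈ Δpos | ε δ = 0})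
    (Φpos : Set XC) (hΦ : Φpos = ε '' (Δpos \ ΔLpos))
    (Ψ : Set XC) (hΨne : Ψ.Nonempty) (hΨΦ : Ψ ⊆ Φpos)
    (hsum : ∀ lam ∈ Ψ, ∀ μ ∈ Φpos, ∀ ν ∈ Φpos, lam = μ + ν → μ ∈ Ψ ∨ ν ∈ Ψ) :
    ∃ α ∈ SR, ε α ≠ 0 ∧ ε α ∈ Ψ := by
  have hmem : ∀ δ, δ ∈ Δpos → ε δ ≠ 0 → ε δ ∈ Φpos := by
    intro δ hδ hne
    rw [hΦ]
    exact ⟨δ, ⟨hδ, by rw [hΔL]; exact fun h => hne h.2⟩, rfl⟩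
  have key : ∀ n : ℕ, ∀ δ ∈ Δpos, ht δ = n → ε δ ≠ 0 → ε δ ∈ Ψ →
      ∃ α ∈ SR, ε α ≠ 0 ∧ ε α ∈ Ψ := by
    intro n
    induction n using Nat.strong_induction_on with
    | _ n ih =>
      intro δ hδ hn hne hΨδ
      by_cases hs : δ ∈ (SR : Set XT)
      · exact ⟨δ, hs, hne, hΨδ⟩
      · obtain ⟨β, hβ, hδβ⟩ := haux δ hδ hs
        have hht' := hht δ hδ β hβ hδβ
        have hlt : ht (δ - β) < n := by omega
        by_cases hβ0 : ε β = 0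
        · have : ε (δ - β) = ε δ := by simp [map_sub, hβ0]
          exact ih _ hlt (δ - β) hδβ rfl (this ▸ hne) (this ▸ hΨδ)
        · by_cases hd0 : ε (δ - β) = 0
          · have heq : ε δ = ε β := by
              have h2 := map_sub ε δ β; rw [hd0] at h2
              exact sub_eq_zero.mp h2.symm
            exact ⟨β, hβ, hβ0, heq ▸ hΨδ⟩
          · have hsplit : ε δ = ε (δ - β) + ε β := by simp [map_sub]
            rcases hsum _ hΨδ _ (hmem _ hδβ hd0) _ (hmem _ (hSR hβ) hβ0) hsplit with h | h
            · exact ih _ hlt (δ - β) hδβ rfl hd0 h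
            · exact ⟨β, hβ, hβ0, h⟩
  obtain ⟨lam, hlam⟩ := hΨne
  obtain ⟨δ, hδ, rfl⟩ : ∃ δ, (δ ∈ Δpos ∧ ε δ ≠ 0) ∧ ε δ = lam := by
    have := hΨΦ hlam
    rw [hΦ] at this
    obtain ⟨δ, ⟨h1, h2⟩, h3⟩ := this
    rw [hΔL] at h2
    exact ⟨δ, ⟨h1, fun h0 => h2 ⟨h1, h0⟩⟩, h3⟩
  exact key _ δ hδ.1 rfl hδ.2 hlam
end

section
/- The GL_n(𝕂)-module V = 𝕂ⁿ ⊕ Λ²𝕂ⁿ (standard representation plus its second exterior power, with GL_n acting diagonally) is a spherical module: a Borel subgroup of GL_n(𝕂) has a dense orbit on V. Equivalently, the coordinate ring 𝕂[V] is multiplicity-free as a GL_n-module. -/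
open Matrix MvPolynomial

def xvec (𝕂 : Type*) [CommRing 𝕂] (m : ℕ) : Fin m → 𝕂 :=
  fun i => if (i : ℕ) + 1 = m then 1 else 0

def Amat (𝕂 : Type*) [CommRing 𝕂] (m : ℕ) : Matrix (Fin m) (Fin m) 𝕂 :=
  Matrix.of fun i j =>
    if (i : ℕ) + 1 = (j : ℕ) then 1 else if (j : ℕ) + 1 = (i : ℕ) then -1 else 0

def good {R S : Type*} [CommRing R] [CommRing S] (φ : R →+* S) :
    (m : ℕ) → (Fin m → R) → R → Matrix (Fin m) (Fin m) R → R → Prop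
  | 0, _, _, _, _ => True
  | (m+1), u, d, M, e =>
      φ (u (Fin.last m)) ≠ 0 ∧
      good φ m (fun i => d * M i.castSucc (Fin.last m)) (e * u (Fin.last m))
        (Matrix.of fun i j =>
          u (Fin.last m) * M i.castSucc j.castSucc
            + u i.castSucc * M j.castSucc (Fin.last m)
            - M i.castSucc (Fin.last m) * u j.castSucc)
        (e * u (Fin.last m))

lemma good_map {R S : Type*} [CommRing R] [CommRing S] (φ : R →+* S) :
    ∀ (m : ℕ) (u : Fin m → R) (d : R) (M : Matrix (Fin m) (Fin m) R) (e : R),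
      good φ m u d M e ↔
      good (RingHom.id S) m (fun i => φ (u i)) (φ d)
        (Matrix.of fun i j => φ (M i j)) (φ e)
  | 0, u, d, M, e => Iff.rfl
  | (m+1), u, d, M, e => by
      simp only [good, RingHom.id_apply, Matrix.of_apply]
      rw [good_map φ m]
      constructor
      · rintro ⟨h1, h2⟩
        refine ⟨h1, ?_⟩
        convert h2 using 2 <;> funext <;> simp [_root_.map_mul, _root_.map_add, _root_.map_sub]
      · rintro ⟨h1, h2⟩
        refine ⟨h1, ?_⟩
        convert h2 using 2 <;> funext <;> simp [_root_.map_mul, _root_.map_add, _root_.map_sub]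

lemma good_xA (𝕂 : Type*) [Field 𝕂] :
    ∀ m : ℕ, good (RingHom.id 𝕂) m (xvec 𝕂 m) 1 (Amat 𝕂 m) 1 := by
  intro m
  induction m with
  | zero => trivial
  | succ m ih =>
    refine ⟨by simp [xvec], ?_⟩
    have h1 : (fun i : Fin m => (1:𝕂) * Amat 𝕂 (m+1) i.castSucc (Fin.last m)) = xvec 𝕂 m := by
      funext i
      simp only [Amat, xvec, Matrix.of_apply, one_mul, Fin.coe_castSucc, Fin.val_last]
      have : ¬ (m + 1 = (i:ℕ)) := by omega
      split_ifs <;> simp_all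
    have h2 : (Matrix.of fun i j : Fin m =>
        xvec 𝕂 (m+1) (Fin.last m) * Amat 𝕂 (m+1) i.castSucc j.castSucc
          + xvec 𝕂 (m+1) i.castSucc * Amat 𝕂 (m+1) j.castSucc (Fin.last m)
          - Amat 𝕂 (m+1) i.castSucc (Fin.last m) * xvec 𝕂 (m+1) j.castSucc)
        = Amat 𝕂 m := by
      funext i j
      have hi : xvec 𝕂 (m+1) i.castSucc = 0 := by
        simp only [xvec, Fin.coe_castSucc]
        have : ¬ ((i:ℕ) + 1 = m + 1) := by omega
        simp [this]; exact i.isLt.ne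
      have hj : xvec 𝕂 (m+1) j.castSucc = 0 := by
        simp only [xvec, Fin.coe_castSucc]
        have : ¬ ((j:ℕ) + 1 = m + 1) := by omega
        simp [this]; exact j.isLt.ne
      have hl : xvec 𝕂 (m+1) (Fin.last m) = 1 := by simp [xvec]
      simp [hi, hj, hl, Amat]
    have hl : xvec 𝕂 (m+1) (Fin.last m) = 1 := by simp [xvec]
    rw [h1, h2, hl]
    simpa using ih

section EX
variable {𝕂 : Type*} [Field 𝕂]

lemma A_cc (m : ℕ) (i j : Fin m) :
    Amat 𝕂 (m+1) i.castSucc j.castSucc = Amat 𝕂 m i j := by simp [Amat]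

lemma A_cl (m : ℕ) (i : Fin m) :
    Amat 𝕂 (m+1) i.castSucc (Fin.last m) = xvec 𝕂 m i := by
  simp only [Amat, xvec, Matrix.of_apply, Fin.coe_castSucc, Fin.val_last]
  have : ¬ (m + 1 = (i:ℕ)) := by omega
  split_ifs <;> simp_all

lemma A_lc (m : ℕ) (j : Fin m) :
    Amat 𝕂 (m+1) (Fin.last m) j.castSucc = - xvec 𝕂 m j := by
  simp only [Amat, xvec, Matrix.of_apply, Fin.coe_castSucc, Fin.val_last]
  have : ¬ (m + 1 = (j:ℕ)) := by omega
  split_ifs <;> simp_all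

lemma A_ll (m : ℕ) : Amat 𝕂 (m+1) (Fin.last m) (Fin.last m) = 0 := by
  simp [Amat]

lemma x_c (m : ℕ) (i : Fin m) : xvec 𝕂 (m+1) i.castSucc = 0 := by
  simp only [xvec, Fin.coe_castSucc]
  have : ¬ ((i:ℕ) + 1 = m + 1) := by omega
  simp [this]; exact i.isLt.ne

lemma x_l (m : ℕ) : xvec 𝕂 (m+1) (Fin.last m) = 1 := by simp [xvec]

lemma good_ex [CharZero 𝕂] :
    ∀ (m : ℕ) (u : Fin m → 𝕂) (d : 𝕂) (M : Matrix (Fin m) (Fin m) 𝕂) (e : 𝕂),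
      d ≠ 0 → e ≠ 0 → Mᵀ = -M → good (RingHom.id 𝕂) m u d M e →
      ∃ g : Matrix (Fin m) (Fin m) 𝕂,
        (∀ i j : Fin m, j < i → g i j = 0) ∧ IsUnit g.det ∧
        g.mulVec (xvec 𝕂 m) = d⁻¹ • u ∧ g * Amat 𝕂 m * gᵀ = e⁻¹ • M := by
  intro m
  induction m with
  | zero =>
    intro u d M e _ _ _ _
    exact ⟨1, by simp, by simp, Subsingleton.elim _ _, Subsingleton.elim _ _⟩
  | succ m ih =>
    intro u d M e hd he hM hg
    obtain ⟨hu, hg2⟩ := hg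
    rw [RingHom.id_apply] at hu
    set η := u (Fin.last m) with hη
    have hMab : ∀ a b, M a b = - M b a := by
      intro a b
      have := congr_fun (congr_fun hM b) a
      simpa [Matrix.transpose_apply] using this
    -- next state
    set c : Fin m → 𝕂 := fun i => M i.castSucc (Fin.last m) with hc
    have hM1 : (Matrix.of fun i j : Fin m =>
        η * M i.castSucc j.castSucc + u i.castSucc * M j.castSucc (Fin.last m)
          - M i.castSucc (Fin.last m) * u j.castSucc)ᵀ
        = - (Matrix.of fun i j : Fin m =>
        η * M i.castSucc j.castSucc + u i.castSucc * M j.castSucc (Fin.last m)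
          - M i.castSucc (Fin.last m) * u j.castSucc) := by
      funext i j
      simp only [Matrix.transpose_apply, Matrix.of_apply, Matrix.neg_apply]
      rw [hMab j.castSucc i.castSucc]
      ring
    obtain ⟨g', htri', hdet', hx', hA'⟩ :=
      ih (fun i => d * M i.castSucc (Fin.last m)) (e * η) _ (e * η)
        (mul_ne_zero he hu) (mul_ne_zero he hu) hM1 hg2
    set v : Fin m → 𝕂 := fun i => d⁻¹ * u i.castSucc with hv
    set t : 𝕂 := d⁻¹ * η with ht
    have htne : t ≠ 0 := mul_ne_zero (inv_ne_zero hd) hu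
    set g : Matrix (Fin (m+1)) (Fin (m+1)) 𝕂 := Matrix.of fun i j =>
      Fin.lastCases (Fin.lastCases t (fun _ => 0) j)
        (fun i' => Fin.lastCases (v i') (fun j' => g' i' j') j) i with hgdef
    have g_cc : ∀ i j : Fin m, g i.castSucc j.castSucc = g' i j := by
      intro i j; simp [hgdef]
    have g_cl : ∀ i : Fin m, g i.castSucc (Fin.last m) = v i := by
      intro i; simp [hgdef]
    have g_lc : ∀ j : Fin m, g (Fin.last m) j.castSucc = 0 := by
      intro j; simp [hgdef]
    have g_ll : g (Fin.last m) (Fin.last m) = t := by simp [hgdef]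
    -- w = g' applied to xvec
    have hw : ∀ i, g'.mulVec (xvec 𝕂 m) i = (e * η)⁻¹ * (d * M i.castSucc (Fin.last m)) := by
      intro i
      rw [hx']
      simp
    have hwsum : ∀ i, (∑ k, g' i k * xvec 𝕂 m k) = (e * η)⁻¹ * (d * M i.castSucc (Fin.last m)) := by
      intro i
      rw [← hw i]
      rfl
    have hGsum : ∀ i j, (∑ l, (∑ k, g' i k * Amat 𝕂 m k l) * g' j l)
        = (e * η)⁻¹ * (η * M i.castSucc j.castSucc + u i.castSucc * M j.castSucc (Fin.last m)
          - M i.castSucc (Fin.last m) * u j.castSucc) := by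
      intro i j
      have := congr_fun (congr_fun hA' i) j
      simp only [Matrix.mul_apply, Matrix.transpose_apply, Matrix.smul_apply,
        Matrix.of_apply, smul_eq_mul] at this
      convert this using 2
    -- triangularity
    have htri : ∀ i j : Fin (m+1), j < i → g i j = 0 := by
      intro i j hlt
      rcases Fin.eq_castSucc_or_eq_last i with ⟨i', rfl⟩ | rfl
      · rcases Fin.eq_castSucc_or_eq_last j with ⟨j', rfl⟩ | rfl
        · rw [g_cc]
          exact htri' i' j' (by exact_mod_cast hlt)
        · exact absurd hlt (by simp only [Fin.lt_iff_val_lt_val, Fin.val_last, Fin.coe_castSucc]; omega)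
      · rcases Fin.eq_castSucc_or_eq_last j with ⟨j', rfl⟩ | rfl
        · exact g_lc j'
        · exact absurd hlt (lt_irrefl _)
    -- determinant
    have hdet : IsUnit g.det := by
      have hbt : g.BlockTriangular id := fun i j h => htri i j h
      have hbt' : g'.BlockTriangular id := fun i j h => htri' i j h
      rw [Matrix.det_of_upperTriangular hbt]
      rw [Matrix.det_of_upperTriangular hbt'] at hdet'
      rw [Fin.prod_univ_castSucc]
      simp only [g_ll]
      have : (∏ i : Fin m, g i.castSucc i.castSucc) = ∏ i : Fin m, g' i i := by
        apply Finset.prod_congr rfl; intro i _; exact g_cc i i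
      rw [this]
      exact (isUnit_iff_ne_zero.2 (mul_ne_zero (isUnit_iff_ne_zero.1 hdet') htne))
    refine ⟨g, htri, hdet, ?_, ?_⟩
    · -- mulVec
      funext i
      have : g.mulVec (xvec 𝕂 (m+1)) i = ∑ j, g i j * xvec 𝕂 (m+1) j := rfl
      rw [this, Fin.sum_univ_castSucc]
      simp only [x_c, x_l, mul_zero, mul_one, Finset.sum_const_zero, zero_add]
      rcases Fin.eq_castSucc_or_eq_last i with ⟨i', rfl⟩ | rfl
      · rw [g_cl]; simp [hv]
      · rw [g_ll]; simp [ht]; exact Or.inl hη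
    · -- the product
      have hB_cc : ∀ (i l : Fin m), (g * Amat 𝕂 (m+1)) i.castSucc l.castSucc
          = (∑ k, g' i k * Amat 𝕂 m k l) - v i * xvec 𝕂 m l := by
        intro i l
        rw [Matrix.mul_apply, Fin.sum_univ_castSucc]
        simp only [g_cl, A_lc]
        rw [Finset.sum_congr rfl (fun k _ => by rw [g_cc, A_cc])]
        ring
      have hB_cl : ∀ i : Fin m, (g * Amat 𝕂 (m+1)) i.castSucc (Fin.last m)
          = (e * η)⁻¹ * (d * M i.castSucc (Fin.last m)) := by
        intro i
        rw [Matrix.mul_apply, Fin.sum_univ_castSucc]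
        simp only [g_cl, A_ll, mul_zero, add_zero]
        rw [Finset.sum_congr rfl (fun k _ => by rw [g_cc, A_cl]), hwsum]
      have hB_lc : ∀ l : Fin m, (g * Amat 𝕂 (m+1)) (Fin.last m) l.castSucc
          = - (t * xvec 𝕂 m l) := by
        intro l
        rw [Matrix.mul_apply, Fin.sum_univ_castSucc]
        have hz : ∀ k : Fin m, g (Fin.last m) k.castSucc * Amat 𝕂 (m+1) k.castSucc l.castSucc = 0 := by
          intro k; rw [g_lc]; ring
        rw [Finset.sum_congr rfl (fun k _ => hz k)]
        simp only [Finset.sum_const_zero, zero_add, g_ll, A_lc]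
        ring
      have hB_ll : (g * Amat 𝕂 (m+1)) (Fin.last m) (Fin.last m) = 0 := by
        rw [Matrix.mul_apply, Fin.sum_univ_castSucc]
        have hz : ∀ k : Fin m, g (Fin.last m) k.castSucc * Amat 𝕂 (m+1) k.castSucc (Fin.last m) = 0 := by
          intro k; rw [g_lc]; ring
        rw [Finset.sum_congr rfl (fun k _ => hz k)]
        simp [g_ll, A_ll]
      funext i j
      have hexp : (g * Amat 𝕂 (m+1) * gᵀ) i j
          = (∑ l : Fin m, (g * Amat 𝕂 (m+1)) i l.castSucc * g j l.castSucc)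
            + (g * Amat 𝕂 (m+1)) i (Fin.last m) * g j (Fin.last m) := by
        rw [Matrix.mul_apply, Fin.sum_univ_castSucc]
        rfl
      rcases Fin.eq_castSucc_or_eq_last i with ⟨i', rfl⟩ | rfl <;>
        rcases Fin.eq_castSucc_or_eq_last j with ⟨j', rfl⟩ | rfl
      · -- cc
        rw [hexp]
        simp only [hB_cc, hB_cl, g_cc, g_cl]
        rw [Finset.sum_congr rfl (fun l _ => by rw [sub_mul])]
        rw [Finset.sum_sub_distrib]
        have e1 : (∑ l : Fin m, v i' * xvec 𝕂 m l * g' j' l) = v i' * ((e*η)⁻¹ * (d * M j'.castSucc (Fin.last m))) := by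
          rw [← hwsum j', Finset.mul_sum]
          apply Finset.sum_congr rfl; intro l _; ring
        rw [e1, hGsum, Matrix.smul_apply, smul_eq_mul]
        simp only [hv]
        rw [mul_inv]
        linear_combination (e⁻¹ * M i'.castSucc j'.castSucc) * mul_inv_cancel₀ hu
          + (η⁻¹ * e⁻¹ * (M i'.castSucc (Fin.last m) * u j'.castSucc
              - u i'.castSucc * M j'.castSucc (Fin.last m))) * mul_inv_cancel₀ hd
      · -- cl
        rw [hexp]
        simp only [g_lc, mul_zero, Finset.sum_const_zero, zero_add, hB_cl, g_ll]
        rw [Matrix.smul_apply, smul_eq_mul, ht]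
        field_simp
      · -- lc
        rw [hexp]
        simp only [hB_lc, hB_ll, g_cc, g_cl, zero_mul, add_zero]
        have e1 : (∑ l : Fin m, -(t * xvec 𝕂 m l) * g' j' l)
            = -(t * ((e*η)⁻¹ * (d * M j'.castSucc (Fin.last m)))) := by
          rw [← hwsum j', Finset.mul_sum, ← Finset.sum_neg_distrib]
          apply Finset.sum_congr rfl; intro l _; ring
        rw [e1, Matrix.smul_apply, smul_eq_mul]
        rw [hMab (Fin.last m) j'.castSucc, ht]
        field_simp
      · -- ll
        rw [hexp]
        simp only [g_lc, mul_zero, Finset.sum_const_zero, zero_add, hB_ll, zero_mul]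
        have hM0 : M (Fin.last m) (Fin.last m) = 0 := by
          have h := hMab (Fin.last m) (Fin.last m)
          have h2 : (2:𝕂) * M (Fin.last m) (Fin.last m) = 0 := by
            rw [two_mul]; nth_rewrite 1 [h]; ring
          rcases mul_eq_zero.1 h2 with h3 | h3
          · exact absurd h3 two_ne_zero
          · exact h3
        rw [Matrix.smul_apply, smul_eq_mul, hM0, mul_zero]
end EX

open Polynomial in
lemma bad_finite {𝕂 : Type*} [Field 𝕂] :
    ∀ (m : ℕ) (u : Fin m → Polynomial 𝕂) (d : Polynomial 𝕂)
      (M : Matrix (Fin m) (Fin m) (Polynomial 𝕂)) (e : Polynomial 𝕂),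
      good (Polynomial.evalRingHom (1:𝕂)) m u d M e →
      {t : 𝕂 | ¬ good (Polynomial.evalRingHom t) m u d M e}.Finite := by
  intro m
  induction m with
  | zero => intro u d M e _; simp [good]
  | succ m ih =>
    intro u d M e h
    obtain ⟨h1, h2⟩ := h
    have hne : u (Fin.last m) ≠ 0 := by
      intro h0; apply h1; rw [h0]; simp
    have hroots : {t : 𝕂 | (u (Fin.last m)).IsRoot t}.Finite :=
      Polynomial.finite_setOf_isRoot hne
    have hih := ih _ _ _ _ h2
    apply Set.Finite.subset (hroots.union hih)
    intro t ht
    simp only [Set.mem_setOf_eq, good, not_and_or] at ht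
    rcases ht with ht | ht
    · left
      simp only [Set.mem_setOf_eq, Polynomial.IsRoot]
      by_contra h0
      exact ht (by simpa using h0)
    · right
      simpa using ht

lemma eval_aeval_poly {𝕂 : Type*} [CommRing 𝕂] {σ : Type*} (t : 𝕂)
    (f : σ → Polynomial 𝕂) (P : MvPolynomial σ 𝕂) :
    Polynomial.eval t (MvPolynomial.aeval f P)
      = MvPolynomial.eval (fun s => Polynomial.eval t (f s)) P := by
  rw [MvPolynomial.aeval_def]
  have : Polynomial.eval t (MvPolynomial.eval₂ (algebraMap 𝕂 (Polynomial 𝕂)) f P)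
      = Polynomial.evalRingHom t (MvPolynomial.eval₂ (algebraMap 𝕂 (Polynomial 𝕂)) f P) := rfl
  rw [this, MvPolynomial.eval₂_comp_left (Polynomial.evalRingHom t)]
  simp only [MvPolynomial.eval, MvPolynomial.coe_eval₂Hom, Function.comp_def]
  congr 1
  ext a
  simp

/-- The `GL_n(𝕂)`-module `V = 𝕂ⁿ ⊕ Λ²𝕂ⁿ` (standard representation plus its
second exterior power, realized as antisymmetric `n × n` matrices with action `A ↦ g A gᵀ`)
is spherical: the Borel subgroup of upper triangular invertible matrices has a dense orbit on
`V`.  Density of the orbit of `(x, A)` in the Zariski topology is expressed as: every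
polynomial function vanishing on the orbit vanishes on the whole variety
`{(y, C) : Cᵀ = -C}`. -/
theorem stmt12 (𝕂 : Type*) [Field 𝕂] [CharZero 𝕂] [IsAlgClosed 𝕂] (n : ℕ) :
    ∃ (x : Fin n → 𝕂) (A : Matrix (Fin n) (Fin n) 𝕂), Aᵀ = -A ∧
      ∀ P : MvPolynomial (Fin n ⊕ Fin n × Fin n) 𝕂,
        (∀ g : Matrix (Fin n) (Fin n) 𝕂, IsUnit g.det →
          (∀ i j : Fin n, j < i → g i j = 0) →
          MvPolynomial.eval
            (Sum.elim (g.mulVec x) (fun q => (g * A * gᵀ) q.1 q.2)) P = 0) →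
        ∀ (y : Fin n → 𝕂) (C : Matrix (Fin n) (Fin n) 𝕂), Cᵀ = -C →
          MvPolynomial.eval (Sum.elim y (fun q => C q.1 q.2)) P = 0 := by
  have hAab : ∀ a b : Fin n, Amat 𝕂 n a b = - Amat 𝕂 n b a := by
    intro a b
    simp only [Amat, Matrix.of_apply]
    split_ifs with h1 h2 h3 <;> first | (simp_all) | (exfalso; omega)
  refine ⟨xvec 𝕂 n, Amat 𝕂 n, ?_, ?_⟩
  · funext i j
    simp only [Matrix.transpose_apply, Matrix.neg_apply]
    exact hAab j i
  intro P hP y C hC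
  have hCab : ∀ a b, C a b = - C b a := by
    intro a b
    have := congr_fun (congr_fun hC b) a
    simpa using this
  set lY : Fin n → Polynomial 𝕂 :=
    fun i => Polynomial.C (y i) + Polynomial.C (xvec 𝕂 n i - y i) * Polynomial.X with hlY
  set lM : Matrix (Fin n) (Fin n) (Polynomial 𝕂) :=
    Matrix.of fun i j =>
      Polynomial.C (C i j) + Polynomial.C (Amat 𝕂 n i j - C i j) * Polynomial.X with hlM
  have h1 : good (Polynomial.evalRingHom (1:𝕂)) n lY 1 lM 1 := by
    rw [good_map]
    simp only [_root_.map_one]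
    have e1 : (fun i => Polynomial.evalRingHom (1:𝕂) (lY i)) = xvec 𝕂 n := by
      funext i; simp [hlY]
    have e2 : (Matrix.of fun i j => Polynomial.evalRingHom (1:𝕂) (lM i j)) = Amat 𝕂 n := by
      funext i j; simp [hlM]
    rw [e1, e2]
    exact good_xA 𝕂 n
  have hfin := bad_finite n lY 1 lM 1 h1
  set q : Polynomial 𝕂 := MvPolynomial.aeval (Sum.elim lY (fun p => lM p.1 p.2)) P with hq
  have hqz : ∀ t : 𝕂, good (Polynomial.evalRingHom t) n lY 1 lM 1 → q.eval t = 0 := by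
    intro t hgt
    rw [good_map] at hgt
    simp only [_root_.map_one] at hgt
    have hanti : (Matrix.of fun i j => Polynomial.evalRingHom t (lM i j))ᵀ
        = -(Matrix.of fun i j => Polynomial.evalRingHom t (lM i j)) := by
      funext i j
      simp only [Matrix.transpose_apply, Matrix.neg_apply, Matrix.of_apply, hlM,
        Polynomial.coe_evalRingHom, Polynomial.eval_add, Polynomial.eval_mul,
        Polynomial.eval_C, Polynomial.eval_X]
      rw [hCab j i, hAab j i]
      ring
    obtain ⟨g, htri, hdet, hx, hA'⟩ :=
      good_ex n (fun i => Polynomial.evalRingHom t (lY i)) 1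
        (Matrix.of fun i j => Polynomial.evalRingHom t (lM i j)) 1
        one_ne_zero one_ne_zero hanti hgt
    have hval := hP g hdet htri
    rw [hx, hA'] at hval
    simp only [inv_one, one_smul] at hval
    have : q.eval t
        = MvPolynomial.eval (fun s => Polynomial.eval t ((Sum.elim lY (fun p => lM p.1 p.2)) s)) P := by
      rw [hq, eval_aeval_poly]
    rw [this]
    have hfun2 : (fun s => Polynomial.eval t ((Sum.elim lY (fun p : Fin n × Fin n => lM p.1 p.2)) s))
        = Sum.elim (fun i => Polynomial.evalRingHom t (lY i))
            (fun q : Fin n × Fin n =>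
              (Matrix.of fun i j => Polynomial.evalRingHom t (lM i j)) q.1 q.2) := by
      funext s
      cases s with
      | inl i => simp
      | inr p => simp
    rw [hfun2]
    exact hval
  have hq0 : q = 0 := by
    by_contra hne
    have hfin2 : (Set.univ : Set 𝕂).Finite := by
      apply Set.Finite.subset (hfin.union (Polynomial.finite_setOf_isRoot hne))
      intro t _
      by_cases hgt : good (Polynomial.evalRingHom t) n lY 1 lM 1
      · right; exact hqz t hgt
      · left; exact hgt
    exact Set.infinite_univ hfin2
  have hz := congrArg (Polynomial.eval (0:𝕂)) hq0
  rw [hq, eval_aeval_poly] at hz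
  simp only [Polynomial.eval_zero] at hz
  have hfun : (fun s => Polynomial.eval 0 ((Sum.elim lY (fun p : Fin n × Fin n => lM p.1 p.2)) s))
      = Sum.elim y (fun q : Fin n × Fin n => C q.1 q.2) := by
    funext s
    cases s with
    | inl i => simp [hlY]
    | inr p => simp [hlM]
  rw [hfun] at hz
  exact hz
end
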